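/- Let n ≥ 1 and k ≥ 2 be integers and let A_1, …, A_k be nonempty compact sets in ℝⁿ. Then Vol_n(∑_{i=1}^k A_i) ≥ (1/(k−1)) · ∑_{i=1}^k Vol_n(∑_{j ∈ [k]∖{i}} A_j), where the sums of sets are Minkowski sums. -/

import Mathlib

open MeasureTheory Finset
open scoped Pointwise ENNReal

namespace FMMZAux

variable {n : ℕ}

private lemma isCompact_finsetSum (t : Finset ℕ) (𝒜 : ℕ → Set (EuclideanSpace ℝ (Fin n)))
    (h : ∀ i, IsCompact (𝒜 i)) : IsCompact (∑ i ∈ t, 𝒜 i) := by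
  classical
  induction t using Finset.cons_induction with
  | empty =>
      rw [Finset.sum_empty]
      exact isCompact_singleton (x := (0 : EuclideanSpace ℝ (Fin n)))
  | cons a s ha ih =>
      rw [Finset.sum_cons]
      exact (h a).add ih

private lemma sum_mem_finsetSum {V : Type*} [AddCommMonoid V] (t : Finset ℕ)
    (𝒜 : ℕ → Set V) (b : ℕ → V) (hb : ∀ i ∈ t, b i ∈ 𝒜 i) :
    ∑ i ∈ t, b i ∈ ∑ i ∈ t, 𝒜 i := by
  classical
  induction t using Finset.cons_induction with
  | empty => simp
  | cons a s ha ih =>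
      rw [Finset.sum_cons, Finset.sum_cons]
      exact Set.add_mem_add (hb a (mem_cons_self a s))
        (ih fun i hi => hb i (mem_cons_of_mem hi))

private lemma exists_of_mem_finsetSum {V : Type*} [AddCommMonoid V] (t : Finset ℕ)
    (𝒜 : ℕ → Set V) {x : V} (hx : x ∈ ∑ i ∈ t, 𝒜 i) :
    ∃ b : ℕ → V, (∀ i ∈ t, b i ∈ 𝒜 i) ∧ ∑ i ∈ t, b i = x := by
  classical
  induction t using Finset.cons_induction generalizing x with
  | empty =>
      refine ⟨fun _ => 0, by simp, ?_⟩
      rw [Finset.sum_empty]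
      simpa using hx.symm
  | cons a s ha ih =>
      rw [Finset.sum_cons] at hx
      obtain ⟨y, hy, z, hz, hyz⟩ := Set.mem_add.mp hx
      obtain ⟨b, hb, hbz⟩ := ih hz
      refine ⟨Function.update b a y, ?_, ?_⟩
      · intro i hi
        rcases Finset.mem_cons.mp hi with rfl | hi'
        · simpa using hy
        · have hia : i ≠ a := fun h => ha (h ▸ hi')
          simpa [Function.update_of_ne hia] using hb i hi'
      · rw [Finset.sum_cons, Function.update_self]
        have : ∑ i ∈ s, Function.update b a y i = ∑ i ∈ s, b i := by
          refine Finset.sum_congr rfl fun i hi => ?_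
          have hia : i ≠ a := fun h => ha (h ▸ hi)
          simp [Function.update_of_ne hia]
        rw [this, hbz, hyz]

private lemma le_apply_of_mem_finsetSum (f : EuclideanSpace ℝ (Fin n) →L[ℝ] ℝ)
    (t : Finset ℕ) (𝒜 : ℕ → Set (EuclideanSpace ℝ (Fin n))) (c : ℕ → ℝ)
    (h : ∀ i ∈ t, ∀ y ∈ 𝒜 i, c i ≤ f y) {x : EuclideanSpace ℝ (Fin n)}
    (hx : x ∈ ∑ i ∈ t, 𝒜 i) : ∑ i ∈ t, c i ≤ f x := by
  obtain ⟨b, hb, rfl⟩ := exists_of_mem_finsetSum t 𝒜 hx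
  rw [map_sum]
  exact Finset.sum_le_sum fun i hi => h i hi (b i) (hb i hi)

private lemma apply_le_of_mem_finsetSum (f : EuclideanSpace ℝ (Fin n) →L[ℝ] ℝ)
    (t : Finset ℕ) (𝒜 : ℕ → Set (EuclideanSpace ℝ (Fin n))) (C : ℕ → ℝ)
    (h : ∀ i ∈ t, ∀ y ∈ 𝒜 i, f y ≤ C i) {x : EuclideanSpace ℝ (Fin n)}
    (hx : x ∈ ∑ i ∈ t, 𝒜 i) : f x ≤ ∑ i ∈ t, C i := by
  obtain ⟨b, hb, rfl⟩ := exists_of_mem_finsetSum t 𝒜 hx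
  rw [map_sum]
  exact Finset.sum_le_sum fun i hi => h i hi (b i) (hb i hi)

private lemma volume_hyperplane (f : EuclideanSpace ℝ (Fin n) →L[ℝ] ℝ)
    (v : EuclideanSpace ℝ (Fin n)) (hv : f v = 1) (c : ℝ) :
    volume {x : EuclideanSpace ℝ (Fin n) | f x = c} = 0 := by
  have hfc : f (c • v) = c := by
    rw [ContinuousLinearMap.map_smul, hv, smul_eq_mul, mul_one]
  set K : Submodule ℝ (EuclideanSpace ℝ (Fin n)) := LinearMap.ker (f : EuclideanSpace ℝ (Fin n) →ₗ[ℝ] ℝ) with hK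
  have hKne : K ≠ ⊤ := by
    intro h
    have hvK : v ∈ K := h ▸ Submodule.mem_top
    rw [hK, LinearMap.mem_ker] at hvK
    simp only [ContinuousLinearMap.coe_coe] at hvK
    rw [hv] at hvK
    exact one_ne_zero hvK
  have h0 : volume (K : Set (EuclideanSpace ℝ (Fin n))) = 0 :=
    Measure.addHaar_submodule _ _ hKne
  have hset : {x : EuclideanSpace ℝ (Fin n) | f x = c}
      = (fun y => (-(c • v)) + y) ⁻¹' (K : Set (EuclideanSpace ℝ (Fin n))) := by
    ext x
    simp only [Set.mem_setOf_eq, Set.mem_preimage, SetLike.mem_coe, hK, LinearMap.mem_ker,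
      ContinuousLinearMap.coe_coe, map_add, map_neg, hfc]
    constructor
    · intro h'
      rw [h']
      ring
    · intro h'
      linarith
  rw [hset, measure_preimage_add]
  exact h0

/-- Core inequality, `ℕ`-indexed version: the sum of the volumes of the leave-one-out
Minkowski sums is at most `(k-1)` times the volume of the total Minkowski sum. -/
private theorem core (hn : 1 ≤ n) (K : ℕ) (𝒜 : ℕ → Set (EuclideanSpace ℝ (Fin n)))
    (hne : ∀ j, (𝒜 j).Nonempty) (hcpt : ∀ j, IsCompact (𝒜 j)) :
    ∑ i ∈ range (K + 2), volume (∑ j ∈ (range (K + 2)).erase i, 𝒜 j)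
      ≤ (K + 1 : ℕ) * volume (∑ j ∈ range (K + 2), 𝒜 j) := by
  classical
  set v : EuclideanSpace ℝ (Fin n) := EuclideanSpace.single ⟨0, hn⟩ (1 : ℝ) with hvdef
  set f : EuclideanSpace ℝ (Fin n) →L[ℝ] ℝ := innerSL ℝ v with hfdef
  have hv : f v = 1 := by
    rw [hfdef]
    simp only [innerSL_apply_apply]
    rw [real_inner_self_eq_norm_sq, hvdef, EuclideanSpace.norm_single]
    norm_num
  have hplane : ∀ c : ℝ, volume {x : EuclideanSpace ℝ (Fin n) | f x = c} = 0 :=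
    volume_hyperplane f v hv
  -- extremizers
  choose p hpmem hpmin using fun j => (hcpt j).exists_isMinOn (hne j) (f.continuous.continuousOn)
  choose q hqmem hqmax using fun j => (hcpt j).exists_isMaxOn (hne j) (f.continuous.continuousOn)
  set m : ℕ → ℝ := fun j => f (p j) with hm
  set M : ℕ → ℝ := fun j => f (q j) with hM
  have hmle : ∀ j, ∀ y ∈ 𝒜 j, m j ≤ f y := fun j y hy => (isMinOn_iff.mp (hpmin j)) y hy
  have hMle : ∀ j, ∀ y ∈ 𝒜 j, f y ≤ M j := fun j y hy => (isMaxOn_iff.mp (hqmax j)) y hy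
  set u : ℕ → ℝ := fun i => (∑ j ∈ range i, M j) + ∑ j ∈ Ico (i + 1) (K + 2), m j with hu
  set Si : ℕ → Set (EuclideanSpace ℝ (Fin n)) :=
    fun i => ∑ j ∈ (range (K + 2)).erase i, 𝒜 j with hSidef
  set S : Set (EuclideanSpace ℝ (Fin n)) := ∑ j ∈ range (K + 2), 𝒜 j with hSdef
  have hSiCompact : ∀ i, IsCompact (Si i) := fun i => isCompact_finsetSum _ _ hcpt
  have hSiMeas : ∀ i, MeasurableSet (Si i) := fun i => (hSiCompact i).isClosed.measurableSet
  have hUMeas : ∀ i, MeasurableSet {x : EuclideanSpace ℝ (Fin n) | u i ≤ f x} :=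
    fun i => measurableSet_le measurable_const f.continuous.measurable
  have hLMeas : ∀ i, MeasurableSet {x : EuclideanSpace ℝ (Fin n) | f x < u i} :=
    fun i => measurableSet_lt f.continuous.measurable measurable_const
  set g : ℕ → ℝ≥0∞ := fun i => volume (Si i ∩ {x : EuclideanSpace ℝ (Fin n) | u i ≤ f x}) with hg
  set h : ℕ → ℝ≥0∞ := fun i => volume (Si i ∩ {x : EuclideanSpace ℝ (Fin n) | f x < u i}) with hh
  -- partition
  have part : ∀ i, g i + h i = volume (Si i) := by
    intro i
    have hcompl : Si i ∩ {x : EuclideanSpace ℝ (Fin n) | f x < u i}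
        = Si i \ {x : EuclideanSpace ℝ (Fin n) | u i ≤ f x} := by
      ext x
      simp [not_le]
    show volume (Si i ∩ {x : EuclideanSpace ℝ (Fin n) | u i ≤ f x})
        + volume (Si i ∩ {x : EuclideanSpace ℝ (Fin n) | f x < u i}) = volume (Si i)
    rw [hcompl]
    exact measure_inter_add_diff _ (hUMeas i)
  -- bottom endpoint
  have hrange0 : (range (K + 2)).erase 0 = Ico 1 (K + 2) := by
    ext j
    simp only [Finset.mem_erase, Finset.mem_range, Finset.mem_Ico]
    omega
  have hu0 : u 0 = ∑ j ∈ Ico 1 (K + 2), m j := by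
    simp [hu]
  have h0 : h 0 = 0 := by
    show volume (Si 0 ∩ {x : EuclideanSpace ℝ (Fin n) | f x < u 0}) = 0
    convert measure_empty (μ := (volume : Measure (EuclideanSpace ℝ (Fin n))))
    ext x
    simp only [Set.mem_inter_iff, Set.mem_setOf_eq, Set.mem_empty_iff_false, iff_false, not_and]
    intro hx hlt
    have hlow : ∑ j ∈ (range (K + 2)).erase 0, m j ≤ f x :=
      le_apply_of_mem_finsetSum f _ 𝒜 m (fun i _ => hmle i) hx
    rw [hrange0] at hlow
    rw [hu0] at hlt
    linarith
  -- top endpoint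
  have hrangetop : (range (K + 2)).erase (K + 1) = range (K + 1) := by
    ext j
    simp only [Finset.mem_erase, Finset.mem_range]
    omega
  have hutop : u (K + 1) = ∑ j ∈ range (K + 1), M j := by
    simp [hu]
  have gtop : g (K + 1) = 0 := by
    show volume (Si (K + 1) ∩ {x : EuclideanSpace ℝ (Fin n) | u (K + 1) ≤ f x}) = 0
    refine measure_mono_null ?_ (hplane (u (K + 1)))
    rintro x ⟨hx1, hx2⟩
    have hupp : f x ≤ ∑ j ∈ (range (K + 2)).erase (K + 1), M j :=
      apply_le_of_mem_finsetSum f _ 𝒜 M (fun i _ => hMle i) hx1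
    rw [hrangetop] at hupp
    simp only [Set.mem_setOf_eq]
    rw [hutop]
    refine le_antisymm hupp ?_
    rw [← hutop]
    exact hx2
  -- threshold identity
  have huid : ∀ i, i < K + 1 → u (i + 1) + m (i + 1) = u i + M i := by
    intro i hi
    have h1 : u (i + 1) = (∑ j ∈ range i, M j) + M i + ∑ j ∈ Ico (i + 2) (K + 2), m j := by
      simp only [hu]
      rw [Finset.sum_range_succ]
    have h2 : u i = (∑ j ∈ range i, M j) + (m (i + 1) + ∑ j ∈ Ico (i + 2) (K + 2), m j) := by
      simp only [hu]
      rw [Finset.sum_eq_sum_Ico_succ_bot (by omega : i + 1 < K + 2) m]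
    rw [h1, h2]
    ring
  -- the packing inequality for each copy
  have copy : ∀ i ∈ range (K + 1), g i + h (i + 1) ≤ volume S := by
    intro i hi
    have hiK : i < K + 1 := mem_range.mp hi
    set a : EuclideanSpace ℝ (Fin n) := q i with ha
    set b : EuclideanSpace ℝ (Fin n) := p (i + 1) with hb
    set P : Set (EuclideanSpace ℝ (Fin n)) :=
      (fun x => -a + x) ⁻¹' (Si i ∩ {x : EuclideanSpace ℝ (Fin n) | u i ≤ f x}) with hP
    set Q : Set (EuclideanSpace ℝ (Fin n)) :=
      (fun x => -b + x) ⁻¹' (Si (i + 1) ∩ {x : EuclideanSpace ℝ (Fin n) | f x < u (i + 1)})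
      with hQ
    have hPvol : volume P = g i := by
      show volume ((fun x => -a + x) ⁻¹'
        (Si i ∩ {x : EuclideanSpace ℝ (Fin n) | u i ≤ f x})) = g i
      rw [measure_preimage_add]
    have hQvol : volume Q = h (i + 1) := by
      show volume ((fun x => -b + x) ⁻¹'
        (Si (i + 1) ∩ {x : EuclideanSpace ℝ (Fin n) | f x < u (i + 1)})) = h (i + 1)
      rw [measure_preimage_add]
    have hPS : P ⊆ S := by
      intro x hx
      obtain ⟨hx1, _⟩ := hx
      have hmem : i ∈ range (K + 2) := mem_range.mpr (by omega)
      have hxeq : x = a + (-a + x) := by rw [add_neg_cancel_left]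
      rw [hSdef, ← Finset.add_sum_erase (range (K + 2)) 𝒜 hmem, hxeq]
      exact Set.add_mem_add (hqmem i) hx1
    have hQS : Q ⊆ S := by
      intro x hx
      obtain ⟨hx1, _⟩ := hx
      have hmem : i + 1 ∈ range (K + 2) := mem_range.mpr (by omega)
      have hxeq : x = b + (-b + x) := by rw [add_neg_cancel_left]
      rw [hSdef, ← Finset.add_sum_erase (range (K + 2)) 𝒜 hmem, hxeq]
      exact Set.add_mem_add (hpmem (i + 1)) hx1
    have hdisj : Disjoint P Q := by
      rw [Set.disjoint_left]
      intro x hxP hxQ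
      obtain ⟨_, hP2⟩ := hxP
      obtain ⟨_, hQ2⟩ := hxQ
      simp only [Set.mem_setOf_eq] at hP2 hQ2
      have hMi : M i = f (q i) := rfl
      have hmi : m (i + 1) = f (p (i + 1)) := rfl
      have e1 : f (-a + x) = -(M i) + f x := by
        rw [map_add, map_neg, hMi, ha]
      have e2 : f (-b + x) = -(m (i + 1)) + f x := by
        rw [map_add, map_neg, hmi, hb]
      rw [e1] at hP2
      rw [e2] at hQ2
      have := huid i hiK
      linarith
    have hQmeas : MeasurableSet Q := by
      rw [hQ]
      exact ((hSiMeas (i + 1)).inter (hLMeas (i + 1))).preimage (measurable_const_add _)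
    calc g i + h (i + 1) = volume P + volume Q := by rw [hPvol, hQvol]
      _ = volume (P ∪ Q) := (measure_union hdisj hQmeas).symm
      _ ≤ volume S := measure_mono (Set.union_subset hPS hQS)
  -- assemble
  calc ∑ i ∈ range (K + 2), volume (∑ j ∈ (range (K + 2)).erase i, 𝒜 j)
      = ∑ i ∈ range (K + 2), (g i + h i) := Finset.sum_congr rfl fun i _ => (part i).symm
    _ = (∑ i ∈ range (K + 2), g i) + ∑ i ∈ range (K + 2), h i := Finset.sum_add_distrib
    _ = ((∑ i ∈ range (K + 1), g i) + g (K + 1))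
        + ((∑ i ∈ range (K + 1), h (i + 1)) + h 0) := by
        rw [Finset.sum_range_succ g (K + 1), Finset.sum_range_succ' h (K + 1)]
    _ = (∑ i ∈ range (K + 1), g i) + ∑ i ∈ range (K + 1), h (i + 1) := by
        rw [gtop, h0, add_zero, add_zero]
    _ = ∑ i ∈ range (K + 1), (g i + h (i + 1)) := Finset.sum_add_distrib.symm
    _ ≤ ∑ _i ∈ range (K + 1), volume S := Finset.sum_le_sum copy
    _ = (K + 1 : ℕ) * volume S := by
        rw [Finset.sum_const, Finset.card_range, nsmul_eq_mul]

end FMMZAux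

/-- **Conjectured fractional superadditivity without the exponents removed is true**
(Theorem 4.1 of Fradelizi–Madiman–Marsiglietti–Zvavitch): if `n ≥ 1`, `k ≥ 2` and
`A 1, …, A k` are nonempty compact subsets of `ℝⁿ`, then the Lebesgue measure of the
Minkowski sum `∑ i, A i` is at least `(k-1)⁻¹` times the sum of the measures of the
leave-one-out Minkowski sums `∑_{j ≠ i} A j`. -/
theorem volume_minkowski_sum_ge_leave_one_out
    (n : ℕ) (hn : 1 ≤ n) (k : ℕ) (hk : 2 ≤ k)
    (A : Fin k → Set (EuclideanSpace ℝ (Fin n)))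
    (hne : ∀ i, (A i).Nonempty) (hcpt : ∀ i, IsCompact (A i)) :
    ((k : ℝ≥0∞) - 1)⁻¹ * ∑ i, volume (∑ j ∈ univ.erase i, A j) ≤ volume (∑ i, A i) := by
  classical
  obtain ⟨K, rfl⟩ : ∃ K, k = K + 2 := ⟨k - 2, by omega⟩
  set 𝒜 : ℕ → Set (EuclideanSpace ℝ (Fin n)) :=
    fun j => if h : j < K + 2 then A ⟨j, h⟩ else {0} with h𝒜
  have h𝒜eq : ∀ i : Fin (K + 2), 𝒜 i.val = A i := by
    intro i
    rw [h𝒜]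
    simp only [i.isLt, dif_pos, Fin.eta]
  have hne' : ∀ j, (𝒜 j).Nonempty := by
    intro j
    rw [h𝒜]
    by_cases hj : j < K + 2
    · simpa [hj] using hne ⟨j, hj⟩
    · simp [hj]
  have hcpt' : ∀ j, IsCompact (𝒜 j) := by
    intro j
    rw [h𝒜]
    by_cases hj : j < K + 2
    · simpa [hj] using hcpt ⟨j, hj⟩
    · simp only [hj, dif_neg, not_false_iff]
      exact isCompact_singleton
  have hS : (∑ i, A i) = ∑ j ∈ range (K + 2), 𝒜 j := by
    rw [← Fin.sum_univ_eq_sum_range (fun j => 𝒜 j) (K + 2)]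
    exact Finset.sum_congr rfl fun i _ => (h𝒜eq i).symm
  have hSi : ∀ i : Fin (K + 2),
      (∑ j ∈ univ.erase i, A j) = ∑ j ∈ (range (K + 2)).erase i.val, 𝒜 j := by
    intro i
    refine Finset.sum_nbij' (fun (j : Fin (K + 2)) => (j : ℕ))
      (fun j => ⟨j % (K + 2), Nat.mod_lt _ (by omega)⟩) ?_ ?_ ?_ ?_ ?_
    · intro a ha
      simp only [Finset.mem_erase, Finset.mem_range]
      refine ⟨?_, a.isLt⟩
      have := (Finset.mem_erase.mp ha).1
      exact fun hval => this (Fin.ext hval)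
    · intro b hb
      obtain ⟨hb1, hb2⟩ := Finset.mem_erase.mp hb
      rw [Finset.mem_range] at hb2
      simp only [Finset.mem_erase, Finset.mem_univ, and_true]
      intro hcon
      apply hb1
      have hval : b % (K + 2) = (i : ℕ) := by
        have := congrArg Fin.val hcon
        simpa using this
      rw [Nat.mod_eq_of_lt hb2] at hval
      exact hval
    · intro a _
      apply Fin.ext
      simp [Nat.mod_eq_of_lt a.isLt]
    · intro b hb
      obtain ⟨_, hb2⟩ := Finset.mem_erase.mp hb
      rw [Finset.mem_range] at hb2
      simp [Nat.mod_eq_of_lt hb2]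
    · intro a _
      exact (h𝒜eq a).symm
  have hsum : (∑ i, volume (∑ j ∈ univ.erase i, A j))
      = ∑ i ∈ range (K + 2), volume (∑ j ∈ (range (K + 2)).erase i, 𝒜 j) := by
    rw [← Fin.sum_univ_eq_sum_range
      (fun i => volume (∑ j ∈ (range (K + 2)).erase i, 𝒜 j)) (K + 2)]
    exact Finset.sum_congr rfl fun i _ => congrArg volume (hSi i)
  have key := FMMZAux.core hn K 𝒜 hne' hcpt'
  rw [← hsum, ← hS] at key
  have hcast : ((K + 2 : ℕ) : ℝ≥0∞) - 1 = ((K + 1 : ℕ) : ℝ≥0∞) := by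
    push_cast
    rw [show ((K : ℝ≥0∞) + 2) = ((K : ℝ≥0∞) + 1) + 1 by ring]
    rw [ENNReal.add_sub_cancel_right ENNReal.one_ne_top]
  have hgoalcast : ((K + 2 : ℕ) : ℝ≥0∞) = ((K : ℕ) : ℝ≥0∞) + 2 := by push_cast; ring
  rw [show ((((K + 2 : ℕ)) : ℝ≥0∞) - 1) = ((K + 1 : ℕ) : ℝ≥0∞) from hcast]
  set a : ℝ≥0∞ := ((K + 1 : ℕ) : ℝ≥0∞) with hadef
  have ha0 : a ≠ 0 := by
    rw [hadef]
    simp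
  have hat : a ≠ ⊤ := by
    rw [hadef]
    exact ENNReal.natCast_ne_top _
  calc a⁻¹ * ∑ i, volume (∑ j ∈ univ.erase i, A j)
      ≤ a⁻¹ * (a * volume (∑ i, A i)) := mul_le_mul_right key _
    _ = volume (∑ i, A i) := by
        rw [← mul_assoc, ENNReal.inv_mul_cancel ha0 hat, one_mul]
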